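/- arXiv:1102.2935 — 4 statements merged into one kernel-verified Lean document; each statement's English description precedes it below -/
import Mathlib

section
/- Let D ≥ 2, let B_1, ..., B_D be reals with B_1 > ∑_{i=2}^D B_i and B_2 > B_3 > ... > B_D > 0, let 0 < β ≤ 1 and δ > 0. Then over all vectors (c_1,...,c_D) with c_1 ≥ c_2 ≥ ... ≥ c_D ≥ 0 and β c_1 + ∑_{i=2}^D c_i = δ, the objective B_1 c_1 − ∑_{i=2}^D B_i c_i attains its minimum at c_1 = c_2 = ... = c_D = δ/(D−1+β), and the minimal value is (B_1 − ∑_{i=2}^D B_i) · δ/(D−1+β). -/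
open Finset

/-- Minimization lemma for the diversity-order linear program. -/
theorem stmt0 (D : ℕ) (hD : 2 ≤ D) (B : ℕ → ℝ) (β δ : ℝ)
    (hB1 : B 1 > ∑ i ∈ Icc 2 D, B i)
    (hBdec : ∀ i ∈ Icc 2 (D - 1), B (i + 1) < B i)
    (hBD : 0 < B D)
    (hβ0 : 0 < β) (hβ1 : β ≤ 1) (hδ : 0 < δ) :
    IsLeast {x : ℝ | ∃ c : ℕ → ℝ,
        (∀ i ∈ Icc 1 (D - 1), c (i + 1) ≤ c i) ∧ 0 ≤ c D ∧
        β * c 1 + ∑ i ∈ Icc 2 D, c i = δ ∧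
        x = B 1 * c 1 - ∑ i ∈ Icc 2 D, B i * c i}
      ((B 1 - ∑ i ∈ Icc 2 D, B i) * (δ / ((D : ℝ) - 1 + β))) ∧
    ((let c : ℕ → ℝ := fun _ => δ / ((D : ℝ) - 1 + β)
      (∀ i ∈ Icc 1 (D - 1), c (i + 1) ≤ c i) ∧ 0 ≤ c D ∧
        β * c 1 + ∑ i ∈ Icc 2 D, c i = δ ∧
        B 1 * c 1 - ∑ i ∈ Icc 2 D, B i * c i
          = (B 1 - ∑ i ∈ Icc 2 D, B i) * (δ / ((D : ℝ) - 1 + β)))) := by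
  have hD1 : (1:ℝ) ≤ (D:ℝ) - 1 := by
    have : (2:ℝ) ≤ (D:ℝ) := by exact_mod_cast hD
    linarith
  have hden : (0:ℝ) < (D:ℝ) - 1 + β := by linarith
  set m := δ / ((D:ℝ) - 1 + β) with hm
  have hm0 : 0 < m := div_pos hδ hden
  have hcardR : ((Icc 2 D).card : ℝ) = (D:ℝ) - 1 := by
    rw [Nat.card_Icc, show D + 1 - 2 = D - 1 by omega,
      Nat.cast_sub (by omega : 1 ≤ D)]
    norm_num
  -- B is positive on [2, D]
  have hBmono : ∀ n, 2 ≤ n → n ≤ D → B D ≤ B n := by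
    intro n h2 hnD
    have key : ∀ k, k ≤ D - n → B D ≤ B (D - k) := by
      intro k
      induction k with
      | zero => intro _; simp
      | succ j ih =>
        intro hj
        have h1 : B D ≤ B (D - j) := ih (by omega)
        have h2' : B (D - (j+1) + 1) < B (D - (j+1)) :=
          hBdec _ (by rw [mem_Icc]; omega)
        rw [show D - (j+1) + 1 = D - j by omega] at h2'
        exact h1.trans h2'.le
    have := key (D - n) (le_refl _)
    rwa [show D - (D - n) = n by omega] at this
  have hBpos : ∀ i ∈ Icc 2 D, 0 < B i := by
    intro i hi; rw [mem_Icc] at hi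
    exact hBD.trans_le (hBmono i hi.1 hi.2)
  -- chain condition implies c i ≤ c 1
  have hchain : ∀ c : ℕ → ℝ, (∀ i ∈ Icc 1 (D-1), c (i+1) ≤ c i) →
      ∀ n, 1 ≤ n → n ≤ D → c n ≤ c 1 := by
    intro c hc n
    induction n with
    | zero => omega
    | succ j ih =>
      intro h1 hnD
      rcases Nat.eq_or_lt_of_le h1 with h | h
      · rw [← h]
      · have hj1 : 1 ≤ j := by omega
        have := hc j (by rw [mem_Icc]; omega)
        exact this.trans (ih hj1 (by omega))
  have hsum_const : ∀ r : ℝ, ∑ _i ∈ Icc 2 D, r = ((D:ℝ) - 1) * r := by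
    intro r
    rw [sum_const, nsmul_eq_mul, hcardR]
  have hfeas_eq : β * m + ∑ _i ∈ Icc 2 D, m = δ := by
    rw [hsum_const, hm]
    field_simp
    ring
  have hobj_eq : B 1 * m - ∑ i ∈ Icc 2 D, B i * m
      = (B 1 - ∑ i ∈ Icc 2 D, B i) * m := by
    rw [← sum_mul]; ring
  constructor
  · constructor
    · exact ⟨fun _ => m, fun i _ => le_refl m, hm0.le, hfeas_eq, hobj_eq.symm⟩
    · rintro x ⟨c, hc, hcD, hsum, rfl⟩
      have hcle : ∀ i ∈ Icc 2 D, c i ≤ c 1 := by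
        intro i hi; rw [mem_Icc] at hi
        exact hchain c hc i (by omega) hi.2
      have hc1m : m ≤ c 1 := by
        have h1 : ∑ i ∈ Icc 2 D, c i ≤ ((D:ℝ) - 1) * c 1 := by
          calc ∑ i ∈ Icc 2 D, c i ≤ ∑ _i ∈ Icc 2 D, c 1 := sum_le_sum hcle
            _ = ((D:ℝ) - 1) * c 1 := hsum_const _
        rw [hm, div_le_iff₀ hden]
        nlinarith
      have hS : ∑ i ∈ Icc 2 D, B i * c i ≤ (∑ i ∈ Icc 2 D, B i) * c 1 := by
        rw [sum_mul]
        exact sum_le_sum fun i hi =>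
          mul_le_mul_of_nonneg_left (hcle i hi) (hBpos i hi).le
      have hpos : 0 ≤ B 1 - ∑ i ∈ Icc 2 D, B i := by linarith
      have : (B 1 - ∑ i ∈ Icc 2 D, B i) * m
          ≤ (B 1 - ∑ i ∈ Icc 2 D, B i) * c 1 :=
        mul_le_mul_of_nonneg_left hc1m hpos
      nlinarith
  · exact ⟨fun i _ => le_refl m, hm0.le, hfeas_eq, hobj_eq⟩
end

section
/- Let M, N be positive integers and L = min(M, N). Fix K with 0 < K ≤ MN/(N+M−1). Then the minimum of ∑_{i=1}^L (|N−M| + 2i − 1) α_i over all α_1 ≥ α_2 ≥ ... ≥ α_L ≥ 0 satisfying ∑_{i=0}^{B−1} α_{L−i} + β α_{L−B} = K − r (where K = B + β, B ∈ ℕ, 0 < β ≤ 1, and 0 ≤ r ≤ K) equals M·N·(1 − r/K), achieved at α_1 = ... = α_L = 1 − r/K. -/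
open Finset

lemma gauss3 (a : ℝ) : ∀ n : ℕ, ∑ i ∈ Icc 1 n, (a + 2*(i:ℝ) - 1) = n*(a+n)
  | 0 => by simp
  | (n+1) => by
      rw [Finset.sum_Icc_succ_top (by omega : 1 ≤ n+1), gauss3 a n]
      push_cast; ring

lemma abel3 (F A : ℕ → ℝ) : ∀ n : ℕ, ∑ i ∈ Icc 1 n, F i * A i
    = (∑ i ∈ Icc 1 n, F i) * A n
      + ∑ j ∈ Icc 1 (n-1), (∑ i ∈ Icc 1 j, F i) * (A j - A (j+1))
  | 0 => by simp
  | 1 => by simp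
  | (n+2) => by
      have e1 : ∑ i ∈ Icc 1 (n+2), F i * A i
          = ∑ i ∈ Icc 1 (n+1), F i * A i + F (n+2) * A (n+2) :=
        Finset.sum_Icc_succ_top (by omega) _
      have e2 : ∑ i ∈ Icc 1 (n+2), F i = ∑ i ∈ Icc 1 (n+1), F i + F (n+2) :=
        Finset.sum_Icc_succ_top (by omega) _
      have e3 : ∑ j ∈ Icc 1 (n+1), (∑ i ∈ Icc 1 j, F i) * (A j - A (j+1))
          = (∑ j ∈ Icc 1 n, (∑ i ∈ Icc 1 j, F i) * (A j - A (j+1)))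
            + (∑ i ∈ Icc 1 (n+1), F i) * (A (n+1) - A (n+2)) :=
        Finset.sum_Icc_succ_top (by omega) _
      have h1 : (n+2) - 1 = n+1 := rfl
      have h2 : (n+1) - 1 = n := rfl
      rw [e1, abel3 F A (n+1), h1, h2, e2, e3]
      ring

set_option maxHeartbeats 1000000 in
/-- Diversity upper-bound optimization in the regime `0 < K ≤ MN/(N+M-1)`:
the minimum of `∑_{i=1}^L (|N-M|+2i-1) α_i` subject to the ordering and boundary
constraints equals `MN(1 - r/K)`, achieved at `α_1 = ⋯ = α_L = 1 - r/K`. -/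
theorem stmt3 (M N : ℕ) (hM : 0 < M) (hN : 0 < N)
    (L : ℕ) (hL : L = min M N)
    (B : ℕ) (β K r : ℝ)
    (hβ0 : 0 < β) (hβ1 : β ≤ 1)
    (hKB : K = (B : ℝ) + β) (hK0 : 0 < K)
    (hKle : K ≤ (M : ℝ) * N / ((N : ℝ) + M - 1))
    (hr0 : 0 ≤ r) (hrK : r ≤ K) :
    IsLeast {x : ℝ | ∃ α : ℕ → ℝ,
        (∀ i ∈ Icc 1 (L - 1), α (i + 1) ≤ α i) ∧ 0 ≤ α L ∧
        (∑ i ∈ Finset.range B, α (L - i)) + β * α (L - B) = K - r ∧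
        x = ∑ i ∈ Icc 1 L, (|(N : ℝ) - M| + 2 * i - 1) * α i}
      ((M : ℝ) * N * (1 - r / K)) ∧
    ((∑ _i ∈ Finset.range B, (1 - r / K)) + β * (1 - r / K) = K - r ∧
      ∑ i ∈ Icc 1 L, (|(N : ℝ) - M| + 2 * i - 1) * (1 - r / K)
        = (M : ℝ) * N * (1 - r / K)) := by
  set a : ℝ := |(N : ℝ) - M| with ha
  have ha0 : 0 ≤ a := abs_nonneg _
  have hL1 : 1 ≤ L := by rw [hL]; exact le_min hM hN
  set c : ℝ := 1 - r / K with hc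
  have hc0 : 0 ≤ c := by
    rw [hc, sub_nonneg]
    exact div_le_one_of_le₀ hrK (le_of_lt hK0)
  have hKc : K * c = K - r := by rw [hc, mul_sub, mul_one, mul_div_assoc', mul_comm K r, mul_div_assoc, div_self hK0.ne', mul_one]
  -- structural facts about L, a
  have fact1 : (L:ℝ) * (a + L) = (M:ℝ) * N := by
    rcases le_total M N with h | h
    · have hLM : (L:ℝ) = M := by rw [hL, min_eq_left h]
      have ha' : a = (N:ℝ) - M := abs_of_nonneg (by
        rw [sub_nonneg]; exact_mod_cast h)
      rw [hLM, ha']; ring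
    · have hLM : (L:ℝ) = N := by rw [hL, min_eq_right h]
      have ha' : a = (M:ℝ) - N := by
        rw [ha, abs_of_nonpos (by rw [sub_nonpos]; exact_mod_cast h)]; ring
      rw [hLM, ha']; ring
  have fact2 : a + 2*(L:ℝ) = (M:ℝ) + N := by
    rcases le_total M N with h | h
    · have hLM : (L:ℝ) = M := by rw [hL, min_eq_left h]
      have ha' : a = (N:ℝ) - M := abs_of_nonneg (by
        rw [sub_nonneg]; exact_mod_cast h)
      rw [hLM, ha']; ring
    · have hLM : (L:ℝ) = N := by rw [hL, min_eq_right h]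
      have ha' : a = (M:ℝ) - N := by
        rw [ha, abs_of_nonpos (by rw [sub_nonpos]; exact_mod_cast h)]; ring
      rw [hLM, ha']; ring
  set W : ℝ := (M:ℝ) * N with hW
  have hkey : K * (a + 2*(L:ℝ) - 1) ≤ W := by
    have hd : (0:ℝ) < (N:ℝ) + M - 1 := by
      have : (1:ℝ) ≤ N := by exact_mod_cast hN
      have : (1:ℝ) ≤ M := by exact_mod_cast hM
      nlinarith [show (1:ℝ) ≤ N from by exact_mod_cast hN]
    have := (le_div_iff₀ hd).mp hKle
    calc K * (a + 2*(L:ℝ) - 1) = K * ((N:ℝ) + M - 1) := by rw [fact2]; ring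
      _ ≤ W := this
  have hLr1 : (1:ℝ) ≤ (L:ℝ) := by exact_mod_cast hL1
  have hWL : W = (L:ℝ) * (a + L) := fact1.symm
  have hKL : K ≤ (L:ℝ) := by nlinarith
  have hBL : B + 1 ≤ L := by
    have : (B:ℝ) < (L:ℝ) := by
      have : (B:ℝ) < K := by rw [hKB]; linarith
      linarith
    have : B < L := by exact_mod_cast this
    omega
  set m : ℕ := L - B with hm
  have hm1 : 1 ≤ m := by omega
  have hmL : m ≤ L := by omega
  have hmr : (m:ℝ) = (L:ℝ) - B := by
    rw [hm]; push_cast [Nat.cast_sub (by omega : B ≤ L)]; ring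
  -- weight and helper functions
  set w : ℕ → ℝ := fun i => a + 2*(i:ℝ) - 1 with hw
  set h : ℕ → ℝ := fun i => if i < m then 0 else if i = m then β else 1 with hhdef
  -- sums of h
  have hh2 : ∀ j : ℕ, m ≤ j → ∑ i ∈ Icc 1 j, h i = β + ((j:ℝ) - m) := by
    intro j hj
    have hsplit : ∑ i ∈ Icc 1 j, h i = ∑ i ∈ Icc 1 m, h i + ∑ i ∈ Ioc m j, h i := by
      rw [show Icc 1 j = Ioc 0 j from (Finset.Icc_add_one_left_eq_Ioc 0 j),
        show Icc 1 m = Ioc 0 m from (Finset.Icc_add_one_left_eq_Ioc 0 m),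
        Finset.sum_Ioc_consecutive _ (by omega) hj]
    have h1 : ∑ i ∈ Icc 1 m, h i = β := by
      rw [Finset.sum_eq_single_of_mem m (by simp [hm1])]
      · simp [hhdef]
      · intro b hb hbm
        have : b < m := by
          simp only [Finset.mem_Icc] at hb; omega
        simp [hhdef, this]
    have h2 : ∑ i ∈ Ioc m j, h i = ((j:ℝ) - m) := by
      have hcong : ∀ i ∈ Ioc m j, h i = 1 := by
        intro i hi
        simp only [Finset.mem_Ioc] at hi
        simp [hhdef, show ¬ i < m by omega, show i ≠ m by omega]
      rw [Finset.sum_congr rfl hcong, Finset.sum_const, Nat.card_Ioc,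
        nsmul_eq_mul, mul_one, Nat.cast_sub hj]
    rw [hsplit, h1, h2]
  have hh1 : ∀ j : ℕ, j < m → ∑ i ∈ Icc 1 j, h i = 0 := by
    intro j hj
    apply Finset.sum_eq_zero
    intro i hi
    simp only [Finset.mem_Icc] at hi
    simp [hhdef, show i < m by omega]
  -- sum of w
  have hwsum : ∀ j : ℕ, ∑ i ∈ Icc 1 j, w i = (j:ℝ) * (a + j) := fun j => gauss3 a j
  -- the constraint sum rewrite
  have hconrw : ∀ α : ℕ → ℝ,
      ∑ i ∈ Icc 1 L, h i * α i = (∑ i ∈ Finset.range B, α (L - i)) + β * α (L - B) := by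
    intro α
    have hsplit : ∑ i ∈ Icc 1 L, h i * α i
        = ∑ i ∈ Icc 1 m, h i * α i + ∑ i ∈ Ioc m L, h i * α i := by
      rw [show Icc 1 L = Ioc 0 L from (Finset.Icc_add_one_left_eq_Ioc 0 L),
        show Icc 1 m = Ioc 0 m from (Finset.Icc_add_one_left_eq_Ioc 0 m),
        Finset.sum_Ioc_consecutive _ (by omega) hmL]
    have h1 : ∑ i ∈ Icc 1 m, h i * α i = β * α (L - B) := by
      rw [Finset.sum_eq_single_of_mem m (by simp [hm1])]
      · simp [hhdef, hm]
      · intro b hb hbm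
        have : b < m := by simp only [Finset.mem_Icc] at hb; omega
        simp [hhdef, this]
    have hcong : ∑ i ∈ Ioc m L, h i * α i = ∑ i ∈ Ioc m L, α i := by
      apply Finset.sum_congr rfl
      intro i hi
      simp only [Finset.mem_Ioc] at hi
      simp [hhdef, show ¬ i < m by omega, show i ≠ m by omega]
    have hbij : ∑ i ∈ Finset.range B, α (L - i) = ∑ i ∈ Ioc m L, α i :=
      Finset.sum_nbij' (fun i => L - i) (fun j => L - j)
        (fun i hi => by simp only [Finset.mem_range] at hi; simp only [Finset.mem_Ioc]; omega)
        (fun j hj => by simp only [Finset.mem_Ioc] at hj; simp only [Finset.mem_range]; omega)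
        (fun i hi => by simp only [Finset.mem_range] at hi; show L - (L - i) = i; omega)
        (fun j hj => by simp only [Finset.mem_Ioc] at hj; show L - (L - j) = j; omega)
        (fun i hi => rfl)
    rw [hsplit, h1, hcong, ← hbij]; ring
  -- achieved identity (used twice)
  have hach1 : (∑ _i ∈ Finset.range B, c) + β * c = K - r := by
    rw [Finset.sum_const, Finset.card_range, nsmul_eq_mul, ← hKc, hKB]; ring
  have hach2 : ∑ i ∈ Icc 1 L, (a + 2 * i - 1) * c = W * c := by
    rw [← Finset.sum_mul]
    have : ∑ i ∈ Icc 1 L, (a + 2 * (i:ℝ) - 1) = (L:ℝ)*(a+L) := gauss3 a L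
    rw [this, fact1]
  refine ⟨⟨⟨fun _ => c, fun i _ => le_rfl, hc0, hach1, hach2.symm⟩, ?_⟩, hach1, hach2⟩
  -- lower bound
  rintro x ⟨α, hord, h0, hcon, rfl⟩
  set g : ℕ → ℝ := fun i => w i - (W/K) * h i with hg
  have hgsum : ∀ j : ℕ, 1 ≤ j → ∑ i ∈ Icc 1 j, g i
      = (j:ℝ)*(a+j) - (W/K) * (∑ i ∈ Icc 1 j, h i) := by
    intro j _
    rw [hg]
    simp only [Finset.sum_sub_distrib, ← Finset.mul_sum, hwsum]
  -- total sum of g is 0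
  have hgtot : ∑ i ∈ Icc 1 L, g i = 0 := by
    rw [hgsum L hL1, hh2 L hmL, hmr, ← fact1]
    have : β + ((L:ℝ) - ((L:ℝ) - B)) = K := by rw [hKB]; ring
    rw [this]
    field_simp; ring
  -- g-weighted sum equals objective minus target
  have hgobj : ∑ i ∈ Icc 1 L, g i * α i
      = (∑ i ∈ Icc 1 L, w i * α i) - W * c := by
    have : ∑ i ∈ Icc 1 L, g i * α i
        = (∑ i ∈ Icc 1 L, w i * α i) - (W/K) * (∑ i ∈ Icc 1 L, h i * α i) := by
      simp only [hg, Finset.sum_sub_distrib, ← Finset.mul_sum, sub_mul, mul_assoc]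
    rw [this, hconrw α, hcon]
    have : (W/K) * (K - r) = W * c := by
      rw [← hKc]; field_simp
    rw [this]
  -- partial sums of g are nonneg
  have hGj : ∀ j ∈ Icc 1 (L-1), 0 ≤ ∑ i ∈ Icc 1 j, g i := by
    intro j hj
    simp only [Finset.mem_Icc] at hj
    obtain ⟨hj1, hj2⟩ := hj
    rw [hgsum j hj1]
    rcases lt_or_ge j m with hjm | hjm
    · rw [hh1 j hjm]
      have : (0:ℝ) ≤ (j:ℝ) := Nat.cast_nonneg j
      nlinarith
    · rw [hh2 j hjm]
      have hjr : (j:ℝ) + 1 ≤ (L:ℝ) := by exact_mod_cast (by omega : j + 1 ≤ L)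
      have hj0 : (1:ℝ) ≤ (j:ℝ) := by exact_mod_cast hj1
      have hident : β + ((j:ℝ) - m) = K + (j:ℝ) - L := by rw [hmr, hKB]; ring
      rw [hident]
      have hprod : W * (K + (j:ℝ) - L) ≤ K * ((j:ℝ)*(a+j)) := by
        have key2 : K * ((j:ℝ)*(a+(j:ℝ))) - W * (K + (j:ℝ) - L)
            = ((L:ℝ) - j) * (W - K * (a + L + j)) := by
          rw [hWL]; ring
        have f1 : (0:ℝ) ≤ (L:ℝ) - j := by linarith
        have f2 : (0:ℝ) ≤ W - K * (a + L + j) := by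
          have : K * (a + (L:ℝ) + j) ≤ K * (a + 2*(L:ℝ) - 1) := by
            apply mul_le_mul_of_nonneg_left _ (le_of_lt hK0)
            linarith
          linarith
        linarith [key2, mul_nonneg f1 f2]
      rw [sub_nonneg, div_mul_eq_mul_div, div_le_iff₀ hK0]
      linarith [hprod]
  -- Abel summation
  have habel := abel3 g α L
  rw [hgtot, zero_mul, zero_add] at habel
  have hnn : 0 ≤ ∑ i ∈ Icc 1 L, g i * α i := by
    rw [habel]
    apply Finset.sum_nonneg
    intro j hj
    apply mul_nonneg (hGj j hj)
    rw [sub_nonneg]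
    exact hord j hj
  rw [hgobj] at hnn
  have : ∑ i ∈ Icc 1 L, w i * α i = ∑ i ∈ Icc 1 L, (a + 2 * (i:ℝ) - 1) * α i := rfl
  linarith [hnn]
end

section
/- Let M, N be positive integers, L = min(M, N), and l ∈ {1, ..., L−1}. Fix K = B + β with B ∈ ℕ, 0 < β ≤ 1, satisfying (M−l+1)(N−l+1)/(N+M−1−2(l−1)) + l − 1 < K ≤ (M−l)(N−l)/(N+M−1−2l) + l. Then the minimum of ∑_{i=1}^L (|N−M| + 2i − 1) α_i over α_1 ≥ ... ≥ α_L ≥ 0 with ∑_{i=0}^{B−1} α_{L−i} + β α_{L−B} = K − r and 0 ≤ r ≤ K equals (M−l)(N−l)·(K−r)/(K−l), achieved at α_L = ... = α_{L−l+1} = 0 and α_{L−l} = ... = α_1 = (K−r)/(K−l). -/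
open Finset

private theorem abel_aux4 (n : ℕ) (d α : ℕ → ℝ)
    (hmono : ∀ i ∈ Icc 1 (n-1), α (i+1) ≤ α i)
    (hD : ∀ j, 1 ≤ j → j ≤ n → 0 ≤ ∑ i ∈ Icc 1 j, d i) :
    ∀ k, k ≤ n → (∑ i ∈ Icc 1 k, d i) * α k ≤ ∑ i ∈ Icc 1 k, d i * α i := by
  intro k
  induction k with
  | zero => simp
  | succ k ih =>
    intro hk
    rw [Finset.sum_Icc_succ_top (by omega : 1 ≤ k+1),
        Finset.sum_Icc_succ_top (by omega : 1 ≤ k+1), add_mul]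
    rcases Nat.eq_zero_or_pos k with hk0 | hk1
    · subst hk0; simp
    · have h1 : α (k+1) ≤ α k := hmono k (by simp; omega)
      have h2 : 0 ≤ ∑ i ∈ Icc 1 k, d i := hD k hk1 (by omega)
      have := ih (by omega)
      nlinarith [mul_le_mul_of_nonneg_left h1 h2]

private theorem sum_w4 (A : ℝ) (j : ℕ) :
    ∑ i ∈ Icc 1 j, (A + 2*(i:ℝ) - 1) = j*A + (j:ℝ)^2 := by
  induction j with
  | zero => simp
  | succ j ih =>
    rw [Finset.sum_Icc_succ_top (by omega : 1 ≤ j+1), ih]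
    push_cast; ring

private theorem reindex_aux4 (B L : ℕ) (hB : B < L) (α : ℕ → ℝ) :
    ∑ i ∈ Finset.range B, α (L - i) = ∑ i ∈ Ioc (L-B) L, α i := by
  apply Finset.sum_nbij' (fun i => L - i) (fun i => L - i)
  · intro a ha; simp at ha ⊢; omega
  · intro a ha; simp at ha ⊢; omega
  · intro a ha; simp at ha ⊢; omega
  · intro a ha; simp at ha ⊢; omega
  · intro a ha; rfl

private theorem gamma_sum4 (β : ℝ) (m j : ℕ) (hm : 1 ≤ m) (hj : m ≤ j) (f : ℕ → ℝ) :
    ∑ i ∈ Icc 1 j, (if i < m then 0 else if i = m then β else 1) * f i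
      = β * f m + ∑ i ∈ Ioc m j, f i := by
  have h1 : Icc 1 j = Ioc 0 j := by rw [← Finset.Icc_add_one_left_eq_Ioc]; rfl
  rw [h1, ← Finset.sum_Ioc_consecutive _ (Nat.zero_le m) hj]
  congr 1
  · rw [Finset.sum_eq_single_of_mem m (by simp; omega)]
    · simp
    · intro b hb hbm; simp at hb
      rw [if_pos (by omega), zero_mul]
  · apply Finset.sum_congr rfl
    intro i hi; simp at hi
    rw [if_neg (by omega), if_neg (by omega), one_mul]

private theorem gamma_sum04 (β : ℝ) (m j : ℕ) (hj : j < m) (f : ℕ → ℝ) :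
    ∑ i ∈ Icc 1 j, (if i < m then 0 else if i = m then β else 1) * f i = 0 := by
  apply Finset.sum_eq_zero
  intro i hi; simp at hi
  rw [if_pos (by omega), zero_mul]

set_option maxHeartbeats 1000000 in
private theorem keyfacts4 (M N : ℕ) (hM : 0 < M) (hN : 0 < N)
    (L : ℕ) (hL : L = min M N) (l : ℕ) (hl1 : 1 ≤ l) (hlL : l ≤ L - 1)
    (B : ℕ) (β K : ℝ)
    (hβ0 : 0 < β) (hβ1 : β ≤ 1) (hKB : K = (B : ℝ) + β)
    (hKlow : ((M : ℝ) - l + 1) * ((N : ℝ) - l + 1) / ((N : ℝ) + M - 1 - 2 * ((l : ℝ) - 1))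
        + l - 1 < K)
    (hKhigh : K ≤ ((M : ℝ) - l) * ((N : ℝ) - l) / ((N : ℝ) + M - 1 - 2 * l) + l) :
    (l:ℝ) < K ∧ K ≤ L ∧ l ≤ B ∧ B < L ∧
      (∀ m : ℕ, m ≤ B →
        ((M:ℝ) - l) * ((N:ℝ) - l) * (K - m) ≤ ((M:ℝ) - m) * ((N:ℝ) - m) * (K - l)) := by
  have hLM : L ≤ M := by omega
  have hLN : L ≤ N := by omega
  have hlM : l + 1 ≤ M := by omega
  have hlN : l + 1 ≤ N := by omega
  have ha : (1:ℝ) ≤ (M:ℝ) - l := by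
    have : ((l+1:ℕ):ℝ) ≤ ((M:ℕ):ℝ) := Nat.cast_le.mpr hlM
    push_cast at this; linarith
  have hb : (1:ℝ) ≤ (N:ℝ) - l := by
    have : ((l+1:ℕ):ℝ) ≤ ((N:ℕ):ℝ) := Nat.cast_le.mpr hlN
    push_cast at this; linarith
  have hD1 : (0:ℝ) < (N:ℝ) + M - 1 - 2 * ((l:ℝ) - 1) := by linarith
  have hD2 : (0:ℝ) < (N:ℝ) + M - 1 - 2 * l := by linarith
  have hfrac1 : (1:ℝ) < ((M : ℝ) - l + 1) * ((N : ℝ) - l + 1) / ((N : ℝ) + M - 1 - 2 * ((l : ℝ) - 1)) := by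
    rw [lt_div_iff₀ hD1]; nlinarith
  have hKl : (l:ℝ) < K := by linarith
  have hLl : (L:ℝ) - l = min ((M:ℝ)-l) ((N:ℝ)-l) := by
    rcases le_total M N with h | h
    · have hc : ((M:ℕ):ℝ) ≤ ((N:ℕ):ℝ) := Nat.cast_le.mpr h
      rw [min_eq_left (by linarith : (M:ℝ)-l ≤ (N:ℝ)-l)]
      have hLM' : L = M := by omega
      rw [hLM']
    · have hc : ((N:ℕ):ℝ) ≤ ((M:ℕ):ℝ) := Nat.cast_le.mpr h
      rw [min_eq_right (by linarith : (N:ℝ)-l ≤ (M:ℝ)-l)]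
      have hLN' : L = N := by omega
      rw [hLN']
  have hfrac2 : ((M : ℝ) - l) * ((N : ℝ) - l) / ((N : ℝ) + M - 1 - 2 * l) ≤ (L:ℝ) - l := by
    rw [div_le_iff₀ hD2, hLl]
    rcases le_total ((M:ℝ)-l) ((N:ℝ)-l) with h | h
    · rw [min_eq_left h]; nlinarith
    · rw [min_eq_right h]; nlinarith
  have hKL : K ≤ (L:ℝ) := by linarith
  have hBl : l ≤ B := by
    by_contra h
    have : ((B+1:ℕ):ℝ) ≤ ((l:ℕ):ℝ) := Nat.cast_le.mpr (by omega)
    push_cast at this; linarith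
  have hBL : B < L := by
    by_contra h
    have : ((L:ℕ):ℝ) ≤ ((B:ℕ):ℝ) := Nat.cast_le.mpr (by omega)
    linarith
  refine ⟨hKl, hKL, hBl, hBL, ?_⟩
  have hKl0 : (0:ℝ) < K - l := by linarith
  have h1 : ((M:ℝ)-l+1)*((N:ℝ)-l+1) < (K - (l:ℝ) + 1) * ((N:ℝ)+M-1-2*((l:ℝ)-1)) :=
    (div_lt_iff₀ hD1).mp (by linarith)
  have hPl1 : (0:ℝ) ≤ ((M:ℝ)-l+1)*((N:ℝ)-l+1)*(K-l) - ((M:ℝ)-l)*((N:ℝ)-l)*(K-(l:ℝ)+1) := by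
    have hid : ((M:ℝ)-l+1)*((N:ℝ)-l+1)*(K-l) - ((M:ℝ)-l)*((N:ℝ)-l)*(K-(l:ℝ)+1)
        = (K - (l:ℝ) + 1) * ((N:ℝ)+M-1-2*((l:ℝ)-1)) - ((M:ℝ)-l+1)*((N:ℝ)-l+1) := by ring
    linarith
  have h2 : (K - (l:ℝ)) * ((N:ℝ)+M-1-2*(l:ℝ)) ≤ ((M:ℝ)-l)*((N:ℝ)-l) :=
    (le_div_iff₀ hD2).mp (by linarith)
  have hPl2 : (0:ℝ) ≤ ((M:ℝ)-l-1)*((N:ℝ)-l-1)*(K-l) - ((M:ℝ)-l)*((N:ℝ)-l)*(K-(l:ℝ)-1) := by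
    have hid : ((M:ℝ)-l-1)*((N:ℝ)-l-1)*(K-l) - ((M:ℝ)-l)*((N:ℝ)-l)*(K-(l:ℝ)-1)
        = ((M:ℝ)-l)*((N:ℝ)-l) - (K - (l:ℝ)) * ((N:ℝ)+M-1-2*(l:ℝ)) := by ring
    linarith
  intro m hm
  rcases lt_trichotomy m l with h | h | h
  · have hm1 : (m:ℝ) ≤ (l:ℝ) - 1 := by
      have : ((m+1:ℕ):ℝ) ≤ ((l:ℕ):ℝ) := Nat.cast_le.mpr (by omega)
      push_cast at this; linarith
    have hint1 := mul_nonneg (mul_nonneg hKl0.le (by linarith : (0:ℝ) ≤ (l:ℝ)-m)) (by linarith : (0:ℝ) ≤ (l:ℝ)-1-m)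
    have hint2 := mul_nonneg (by linarith : (0:ℝ) ≤ (l:ℝ)-m) hPl1
    have hid : ((M:ℝ) - m) * ((N:ℝ) - m) * (K - l) - ((M:ℝ) - l) * ((N:ℝ) - l) * (K - m)
        = ((l:ℝ)-m) * (((M:ℝ)-l+1)*((N:ℝ)-l+1)*(K-l) - ((M:ℝ)-l)*((N:ℝ)-l)*(K-(l:ℝ)+1))
          + (K-l) * ((l:ℝ)-m) * ((l:ℝ)-1-m) := by ring
    linarith
  · subst h
    apply le_of_eq; ring
  · have hm1 : (l:ℝ) + 1 ≤ (m:ℝ) := by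
      have : ((l+1:ℕ):ℝ) ≤ ((m:ℕ):ℝ) := Nat.cast_le.mpr (by omega)
      push_cast at this; linarith
    have hint1 := mul_nonneg (mul_nonneg hKl0.le (by linarith : (0:ℝ) ≤ (m:ℝ)-l)) (by linarith : (0:ℝ) ≤ (m:ℝ)-l-1)
    have hint2 := mul_nonneg (by linarith : (0:ℝ) ≤ (m:ℝ)-l) hPl2
    have hid : ((M:ℝ) - m) * ((N:ℝ) - m) * (K - l) - ((M:ℝ) - l) * ((N:ℝ) - l) * (K - m)
        = ((m:ℝ)-l) * (((M:ℝ)-l-1)*((N:ℝ)-l-1)*(K-l) - ((M:ℝ)-l)*((N:ℝ)-l)*(K-(l:ℝ)-1))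
          + (K-l) * ((m:ℝ)-l) * ((m:ℝ)-l-1) := by ring
    linarith

set_option maxHeartbeats 1000000 in
/-- Diversity upper-bound optimization in the `l`-th interval of `K`:
the minimum of `∑_{i=1}^L (|N-M|+2i-1) α_i` subject to the constraints equals
`(M-l)(N-l)(K-r)/(K-l)`, achieved at `α_L = ⋯ = α_{L-l+1} = 0` and
`α_{L-l} = ⋯ = α_1 = (K-r)/(K-l)`. -/
theorem stmt4 (M N : ℕ) (hM : 0 < M) (hN : 0 < N)
    (L : ℕ) (hL : L = min M N) (l : ℕ) (hl1 : 1 ≤ l) (hlL : l ≤ L - 1)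
    (B : ℕ) (β K r : ℝ)
    (hβ0 : 0 < β) (hβ1 : β ≤ 1) (hKB : K = (B : ℝ) + β)
    (hKlow : ((M : ℝ) - l + 1) * ((N : ℝ) - l + 1) / ((N : ℝ) + M - 1 - 2 * ((l : ℝ) - 1))
        + l - 1 < K)
    (hKhigh : K ≤ ((M : ℝ) - l) * ((N : ℝ) - l) / ((N : ℝ) + M - 1 - 2 * l) + l)
    (hr0 : 0 ≤ r) (hrK : r ≤ K) :
    IsLeast {x : ℝ | ∃ α : ℕ → ℝ,
        (∀ i ∈ Icc 1 (L - 1), α (i + 1) ≤ α i) ∧ 0 ≤ α L ∧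
        (∑ i ∈ Finset.range B, α (L - i)) + β * α (L - B) = K - r ∧
        x = ∑ i ∈ Icc 1 L, (|(N : ℝ) - M| + 2 * i - 1) * α i}
      (((M : ℝ) - l) * ((N : ℝ) - l) * (K - r) / (K - l)) ∧
    ((let α : ℕ → ℝ := fun i => if i ≤ L - l then (K - r) / (K - l) else 0
      (∀ i ∈ Icc 1 (L - 1), α (i + 1) ≤ α i) ∧ 0 ≤ α L ∧
        (∑ i ∈ Finset.range B, α (L - i)) + β * α (L - B) = K - r ∧
        ∑ i ∈ Icc 1 L, (|(N : ℝ) - M| + 2 * i - 1) * α i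
          = ((M : ℝ) - l) * ((N : ℝ) - l) * (K - r) / (K - l))) := by
  obtain ⟨hKl, hKL, hBl, hBL, hP⟩ :=
    keyfacts4 M N hM hN L hL l hl1 hlL B β K hβ0 hβ1 hKB hKlow hKhigh
  have hKl0 : (0:ℝ) < K - l := by linarith
  have hlL' : l < L := by omega
  have hc0 : 0 ≤ (K - r) / (K - l) := div_nonneg (by linarith) hKl0.le
  -- the weight prefix-sum identity
  have hW : ∀ j : ℕ, j ≤ L →
      (j:ℝ) * |(N:ℝ) - M| + (j:ℝ)^2
        = ((M:ℝ) - ((L - j : ℕ):ℝ)) * ((N:ℝ) - ((L - j : ℕ):ℝ)) := by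
    intro j hj
    rw [Nat.cast_sub hj]
    rcases le_total M N with h | h
    · have hc : ((M:ℕ):ℝ) ≤ ((N:ℕ):ℝ) := Nat.cast_le.mpr h
      have hLM' : L = M := by omega
      have hLr : (L:ℝ) = (M:ℝ) := by rw [hLM']
      rw [abs_of_nonneg (by linarith), hLr]; ring
    · have hc : ((N:ℕ):ℝ) ≤ ((M:ℕ):ℝ) := Nat.cast_le.mpr h
      have hLN' : L = N := by omega
      have hLr : (L:ℝ) = (N:ℝ) := by rw [hLN']
      rw [abs_of_nonpos (by linarith), hLr]; ring
  -- candidate feasibility & value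
  have hcand : (∀ i ∈ Icc 1 (L - 1),
        (fun i => if i ≤ L - l then (K - r) / (K - l) else 0 : ℕ → ℝ) (i + 1)
          ≤ (fun i => if i ≤ L - l then (K - r) / (K - l) else 0 : ℕ → ℝ) i) ∧
      0 ≤ (fun i => if i ≤ L - l then (K - r) / (K - l) else 0 : ℕ → ℝ) L ∧
      (∑ i ∈ Finset.range B,
          (fun i => if i ≤ L - l then (K - r) / (K - l) else 0 : ℕ → ℝ) (L - i))
        + β * (fun i => if i ≤ L - l then (K - r) / (K - l) else 0 : ℕ → ℝ) (L - B)
          = K - r ∧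
      ∑ i ∈ Icc 1 L, (|(N : ℝ) - M| + 2 * i - 1) *
          (fun i => if i ≤ L - l then (K - r) / (K - l) else 0 : ℕ → ℝ) i
        = ((M : ℝ) - l) * ((N : ℝ) - l) * (K - r) / (K - l) := by
    refine ⟨?_, ?_, ?_, ?_⟩
    · intro i hi
      beta_reduce
      by_cases h : i + 1 ≤ L - l
      · rw [if_pos h, if_pos (by omega)]
      · rw [if_neg h]
        by_cases h2 : i ≤ L - l
        · rw [if_pos h2]; exact hc0
        · rw [if_neg h2]
    · beta_reduce
      rw [if_neg (by omega : ¬ L ≤ L - l)]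
    · beta_reduce
      have h1 : ∑ i ∈ Finset.range B,
          (if L - i ≤ L - l then (K - r) / (K - l) else 0)
          = ∑ i ∈ Finset.range B, (if l ≤ i then (K - r) / (K - l) else 0) := by
        apply Finset.sum_congr rfl
        intro i hi; simp at hi
        by_cases h : l ≤ i
        · rw [if_pos (by omega), if_pos h]
        · rw [if_neg (by omega), if_neg h]
      rw [h1, if_pos (by omega : L - B ≤ L - l)]
      have h2 : ∑ i ∈ Finset.range B, (if l ≤ i then (K - r) / (K - l) else 0)
          = ((B - l : ℕ):ℝ) * ((K - r) / (K - l)) := by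
        rw [Finset.range_eq_Ico, ← Finset.sum_Ico_consecutive _ (Nat.zero_le l) hBl]
        rw [Finset.sum_congr rfl (fun i hi => if_neg (by simp at hi; omega)),
            Finset.sum_congr rfl (fun i hi => if_pos (by simp at hi; omega))]
        simp [Nat.card_Ico]
      rw [h2, Nat.cast_sub hBl]
      have he : ((B:ℝ) - l) * ((K-r)/(K-(l:ℝ))) + β * ((K-r)/(K-(l:ℝ)))
          = (K-r)/(K-(l:ℝ)) * (K - (l:ℝ)) := by
        rw [hKB]; ring
      rw [he, div_mul_cancel₀ _ (ne_of_gt hKl0)]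
    · beta_reduce
      have hsplit : Icc 1 L = Ioc 0 L := by rw [← Finset.Icc_add_one_left_eq_Ioc]; rfl
      rw [hsplit, ← Finset.sum_Ioc_consecutive _ (Nat.zero_le (L - l)) (by omega : L - l ≤ L)]
      have h1 : ∑ i ∈ Ioc 0 (L - l), (|(N : ℝ) - M| + 2 * i - 1) *
          (if i ≤ L - l then (K - r) / (K - l) else 0)
          = (∑ i ∈ Icc 1 (L - l), (|(N : ℝ) - M| + 2 * (i:ℝ) - 1)) * ((K - r) / (K - l)) := by
        rw [← Finset.Icc_add_one_left_eq_Ioc, Finset.sum_mul]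
        apply Finset.sum_congr rfl
        intro i hi; simp at hi
        rw [if_pos (by omega)]
      have h2 : ∑ i ∈ Ioc (L - l) L, (|(N : ℝ) - M| + 2 * i - 1) *
          (if i ≤ L - l then (K - r) / (K - l) else 0) = 0 := by
        apply Finset.sum_eq_zero
        intro i hi; simp at hi
        rw [if_neg (by omega), mul_zero]
      rw [h1, h2, sum_w4, add_zero]
      have h3 := hW (L - l) (by omega)
      have h4 : L - (L - l) = l := by omega
      rw [h4] at h3
      rw [h3]
      field_simp
  constructor
  · constructor
    · exact ⟨_, hcand.1, hcand.2.1, hcand.2.2.1, hcand.2.2.2.symm⟩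
    · rintro x ⟨α, hmono, hnn, hcon, hx⟩
      -- lower bound via Abel summation
      set lam : ℝ := ((M:ℝ) - l) * ((N:ℝ) - l) / (K - l) with hlam
      have hlam0 : 0 ≤ lam := by
        apply div_nonneg _ hKl0.le
        have h3 := hW (L - l) (by omega)
        have h4 : L - (L - l) = l := by omega
        rw [h4] at h3
        rw [← h3]
        positivity
      set γ : ℕ → ℝ := fun i => if i < L - B then 0 else if i = L - B then β else 1 with hγ
      have hcon' : ∑ i ∈ Icc 1 L, γ i * α i = K - r := by
        rw [hγ]
        rw [gamma_sum4 β (L - B) L (by omega) (by omega) α]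
        rw [← reindex_aux4 B L hBL α]
        linarith [hcon]
      set d : ℕ → ℝ := fun i => (|(N:ℝ) - M| + 2 * i - 1) - γ i * lam with hd
      have hD : ∀ j, 1 ≤ j → j ≤ L → 0 ≤ ∑ i ∈ Icc 1 j, d i := by
        intro j hj1 hjL
        rw [hd]
        rw [Finset.sum_sub_distrib, sum_w4]
        rcases lt_or_ge j (L - B) with h | h
        · rw [gamma_sum04 β (L - B) j h (fun _ => lam), sub_zero]
          positivity
        · rw [gamma_sum4 β (L - B) j (by omega) h (fun _ => lam)]
          rw [Finset.sum_const, Nat.card_Ioc, nsmul_eq_mul]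
          have hm : L - j ≤ B := by omega
          have hP' := hP (L - j) hm
          have hWj := hW j hjL
          have hcast1 : ((j - (L - B) : ℕ):ℝ) = (j:ℝ) - ((L:ℝ) - (B:ℝ)) := by
            have e1 : ((j - (L - B) : ℕ):ℝ) = (j:ℝ) - ((L - B:ℕ):ℝ) :=
              Nat.cast_sub (by omega)
            rw [e1, Nat.cast_sub (by omega)]
          have hcast2 : ((L - j : ℕ):ℝ) = (L:ℝ) - (j:ℝ) := Nat.cast_sub hjL
          rw [hcast1]
          -- goal: 0 ≤ j*|N-M| + j^2 - (β*lam + (j - (L - B))*lam)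
          rw [hcast2] at hWj
          have hKm : β + ((j:ℝ) - ((L:ℝ) - (B:ℝ))) = K - ((L:ℝ) - (j:ℝ)) := by
            rw [hKB]; ring
          have hle : lam * (K - ((L:ℝ) - (j:ℝ)))
              ≤ ((M:ℝ) - ((L:ℝ) - (j:ℝ))) * ((N:ℝ) - ((L:ℝ) - (j:ℝ))) := by
            rw [hlam, div_mul_eq_mul_div, div_le_iff₀ hKl0]
            rw [hcast2] at hP'
            exact hP'
          rw [hWj]
          nlinarith [hle]
      have habel := abel_aux4 L d α hmono hD L le_rfl
      have hDL := hD L (by omega) le_rfl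
      have hsum : ∑ i ∈ Icc 1 L, d i * α i
          = (∑ i ∈ Icc 1 L, (|(N:ℝ) - M| + 2 * i - 1) * α i) - lam * (K - r) := by
        rw [hd]
        have : ∀ i, ((|(N:ℝ) - M| + 2 * i - 1) - γ i * lam) * α i
            = (|(N:ℝ) - M| + 2 * i - 1) * α i - lam * (γ i * α i) := by
          intro i; ring
        rw [Finset.sum_congr rfl (fun i _ => this i), Finset.sum_sub_distrib,
            ← Finset.mul_sum, hcon']
      have h0 : 0 ≤ ∑ i ∈ Icc 1 L, d i * α i := by
        calc (0:ℝ) ≤ (∑ i ∈ Icc 1 L, d i) * α L := mul_nonneg hDL hnn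
        _ ≤ _ := habel
      rw [hx]
      have : ((M : ℝ) - l) * ((N : ℝ) - l) * (K - r) / (K - l) = lam * (K - r) := by
        rw [hlam]; ring
      rw [this]
      linarith [hsum, h0]
  · exact hcand
end

section
/- Let M, N be positive integers, L = min(M, N), and consider the transmission scheme G_l for 0 ≤ l ≤ L−1 with T_l = N+M−1−2l channel uses, where (for N ≥ M) the blocks of the effective channel are Ĥ_i = H for i = 1,...,N−M+1, Ĥ_{N−M+2k} = (h_1,...,h_{M−k}) and Ĥ_{N−M+2k+1} = (h_{k+1},...,h_M) for k = 1,...,M−1−l. Then for any 1 ≤ j ≤ i ≤ M with i − j < L, the columns h_j, ..., h_i occur together in at most N − i + j blocks. -/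
/-- For the transmission scheme `G_l` with `N ≥ M` (blocks of the effective channel as
described), the columns `h_j, …, h_i` occur together in at most `N - i + j` blocks. -/
theorem stmt14 (M N l : ℕ) (hM : 1 ≤ M) (hNM : M ≤ N) (hl : l ≤ min M N - 1)
    (block : ℕ → Finset ℕ)
    (h1 : ∀ m : ℕ, 1 ≤ m → m ≤ N - M + 1 → block m = Finset.Icc 1 M)
    (h2 : ∀ k : ℕ, 1 ≤ k → k ≤ M - 1 - l → block (N - M + 1 + 2 * k - 1) = Finset.Icc 1 (M - k))
    (h3 : ∀ k : ℕ, 1 ≤ k → k ≤ M - 1 - l → block (N - M + 1 + 2 * k) = Finset.Icc (k + 1) M)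
    (i j : ℕ) (hj : 1 ≤ j) (hji : j ≤ i) (hiM : i ≤ M) (hij : i - j < min M N) :
    ((Finset.Icc 1 (N + M - 1 - 2 * l)).filter
        (fun m => Finset.Icc j i ⊆ block m)).card ≤ N - i + j := by
  have hmin : min M N = M := min_eq_left hNM
  rw [hmin] at hl hij
  set S := (Finset.Icc 1 (N - M + 1) ∪
      (Finset.Icc 1 (M - i)).image (fun k => N - M + 2 * k)) ∪
      (Finset.Icc 1 (j - 1)).image (fun k => N - M + 1 + 2 * k) with hS
  have hsub : (Finset.Icc 1 (N + M - 1 - 2 * l)).filter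
      (fun m => Finset.Icc j i ⊆ block m) ⊆ S := by
    intro m hm
    simp only [Finset.mem_filter, Finset.mem_Icc] at hm
    obtain ⟨⟨hm1, hm2⟩, hcont⟩ := hm
    have hjm : j ∈ Finset.Icc j i := Finset.mem_Icc.mpr ⟨le_refl j, hji⟩
    have him : i ∈ Finset.Icc j i := Finset.mem_Icc.mpr ⟨hji, le_refl i⟩
    by_cases hc : m ≤ N - M + 1
    · exact Finset.mem_union_left _ (Finset.mem_union_left _ (Finset.mem_Icc.mpr ⟨hm1, hc⟩))
    · push_neg at hc
      rcases Nat.even_or_odd (m - (N - M + 1)) with ⟨k, hk⟩ | ⟨k, hk⟩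
      · -- m = N - M + 1 + 2k, block = Icc (k+1) M
        have hk1 : 1 ≤ k := by omega
        have hm' : m = N - M + 1 + 2 * k := by omega
        have hkl : k ≤ M - 1 - l := by omega
        have hb : block m = Finset.Icc (k + 1) M := by rw [hm']; exact h3 k hk1 hkl
        have hjb := hcont hjm
        rw [hb, Finset.mem_Icc] at hjb
        refine Finset.mem_union_right _ (Finset.mem_image.mpr ⟨k, ?_, hm'.symm⟩)
        exact Finset.mem_Icc.mpr ⟨hk1, by omega⟩
      · -- m = N - M + 2 + 2k, block = Icc 1 (M - (k+1))
        have hm' : m = N - M + 1 + 2 * (k + 1) - 1 := by omega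
        have hkl : k + 1 ≤ M - 1 - l := by omega
        have hb : block m = Finset.Icc 1 (M - (k + 1)) := by
          rw [hm']; exact h2 (k + 1) (by omega) hkl
        have hib := hcont him
        rw [hb, Finset.mem_Icc] at hib
        refine Finset.mem_union_left _ (Finset.mem_union_right _
          (Finset.mem_image.mpr ⟨k + 1, ?_, by omega⟩))
        exact Finset.mem_Icc.mpr ⟨by omega, by omega⟩
  have hcard : S.card ≤ (N - M + 1) + (M - i) + (j - 1) := by
    calc S.card ≤ (Finset.Icc 1 (N - M + 1) ∪
          (Finset.Icc 1 (M - i)).image (fun k => N - M + 2 * k)).card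
          + ((Finset.Icc 1 (j - 1)).image (fun k => N - M + 1 + 2 * k)).card :=
        Finset.card_union_le _ _
      _ ≤ (Finset.Icc 1 (N - M + 1)).card
          + ((Finset.Icc 1 (M - i)).image (fun k => N - M + 2 * k)).card
          + ((Finset.Icc 1 (j - 1)).image (fun k => N - M + 1 + 2 * k)).card := by
        gcongr; exact Finset.card_union_le _ _
      _ ≤ (Finset.Icc 1 (N - M + 1)).card + (Finset.Icc 1 (M - i)).card
          + (Finset.Icc 1 (j - 1)).card :=
        add_le_add (add_le_add le_rfl Finset.card_image_le) Finset.card_image_le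
      _ ≤ (N - M + 1) + (M - i) + (j - 1) := by
        simp [Nat.card_Icc]
  have := Finset.card_le_card hsub
  omega
end
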